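/- Let a, b > −1 be real and n ≥ 1. Then the Jacobi polynomial P_n^{(a,b)} has exactly n roots in ℝ, all of which are simple (the derivative does not vanish at any root) and lie in the open interval (−1,1). -/

import Mathlib

open Real MeasureTheory intervalIntegral Finset

/-- Jacobi polynomial `P_n^{(a,b)}(τ)` for natural index `n` (general real parameters). -/
noncomputable def jacobiPNat (n : ℕ) (a b τ : ℝ) : ℝ :=
  (1 / 2 ^ n) * ∑ k ∈ Finset.range (n + 1),
    (Real.Gamma ((n : ℝ) + a + 1) / (Real.Gamma ((k : ℝ) + a + 1) * (Nat.factorial (n - k) : ℝ))) *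
    (Real.Gamma ((n : ℝ) + b + 1) / (Real.Gamma (((n - k : ℕ) : ℝ) + b + 1) * (Nat.factorial k : ℝ))) *
    (τ - 1) ^ k * (τ + 1) ^ (n - k)

/-- Jacobi polynomial with integer index, with the convention `P_{-1}^{(a,b)} = 0`. -/
noncomputable def jacobiP (m : ℤ) (a b τ : ℝ) : ℝ :=
  if 0 ≤ m then jacobiPNat m.toNat a b τ else 0

/-- Left Riemann--Liouville fractional derivative of order `α` (for `1 < α < 2`):
`(₀D_x^α g)(x) = (1/Γ(2−α)) (d²/dx²) ∫_0^x (x−s)^{1−α} g(s) ds`. -/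
noncomputable def leftRL (α : ℝ) (g : ℝ → ℝ) (x : ℝ) : ℝ :=
  (1 / Real.Gamma (2 - α)) *
    deriv (deriv (fun t : ℝ => ∫ s in (0:ℝ)..t, (t - s) ^ (1 - α) * g s)) x

/-- Right Riemann--Liouville fractional derivative of order `α` (for `1 < α < 2`):
`(ₓD_1^α g)(x) = (1/Γ(2−α)) (d²/dx²) ∫_x^1 (s−x)^{1−α} g(s) ds`. -/
noncomputable def rightRL (α : ℝ) (g : ℝ → ℝ) (x : ℝ) : ℝ :=
  (1 / Real.Gamma (2 - α)) *
    deriv (deriv (fun t : ℝ => ∫ s in t..(1:ℝ), (s - t) ^ (1 - α) * g s)) x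

/-- The function `ζ_k` appearing in the fractional differentiation matrices. -/
noncomputable def zeta (β : ℝ) (k : ℕ) (x : ℝ) : ℝ :=
  Real.Gamma ((k : ℝ) + 1) / Real.Gamma ((k : ℝ) - 1 + β) * x ^ (β - 1) *
      jacobiP ((k : ℤ) - 1) (3 - β) (β - 1) (2 * x - 1)
    - Real.Gamma ((k : ℝ) + 2) / Real.Gamma ((k : ℝ) + β) * (((k : ℝ) + 2) / (2 * (k : ℝ) + 1)) *
        x ^ β * jacobiP ((k : ℤ) - 1) (3 - β) β (2 * x - 1)
    - Real.Gamma ((k : ℝ) + 1) / Real.Gamma ((k : ℝ) - 1 + β) * ((k : ℝ) / (2 * (k : ℝ) + 1)) *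
        x ^ β * jacobiP ((k : ℤ) - 2) (3 - β) β (2 * x - 1)

namespace JacAux
open Polynomial

noncomputable def cf (a b : ℝ) (n k : ℕ) : ℝ :=
  (Real.Gamma ((n : ℝ) + a + 1) / (Real.Gamma ((k : ℝ) + a + 1) * (Nat.factorial (n - k) : ℝ))) *
  (Real.Gamma ((n : ℝ) + b + 1) / (Real.Gamma (((n - k : ℕ) : ℝ) + b + 1) * (Nat.factorial k : ℝ)))

noncomputable def jp (a b : ℝ) (n : ℕ) : Polynomial ℝ :=
  Polynomial.C ((1:ℝ) / 2 ^ n) *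
    ∑ k ∈ Finset.range (n + 1),
      Polynomial.C (cf a b n k) * (X - Polynomial.C 1) ^ k * (X + Polynomial.C 1) ^ (n - k)

lemma jp_eval (a b : ℝ) (n : ℕ) (x : ℝ) :
    (jp a b n).eval x = jacobiPNat n a b x := by
  simp [jp, jacobiPNat, cf, eval_finset_sum, mul_assoc]

lemma cf_pos {a b : ℝ} (ha : -1 < a) (hb : -1 < b) (n k : ℕ) : 0 < cf a b n k := by
  have c1 : (0:ℝ) ≤ (n:ℝ) := Nat.cast_nonneg n
  have c2 : (0:ℝ) ≤ (k:ℝ) := Nat.cast_nonneg k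
  have c3 : (0:ℝ) ≤ ((n - k : ℕ):ℝ) := Nat.cast_nonneg _
  have g1 : (0:ℝ) < Real.Gamma ((n : ℝ) + a + 1) := Real.Gamma_pos_of_pos (by linarith)
  have g2 : (0:ℝ) < Real.Gamma ((k : ℝ) + a + 1) := Real.Gamma_pos_of_pos (by linarith)
  have g3 : (0:ℝ) < Real.Gamma ((n : ℝ) + b + 1) := Real.Gamma_pos_of_pos (by linarith)
  have g4 : (0:ℝ) < Real.Gamma (((n - k : ℕ) : ℝ) + b + 1) := Real.Gamma_pos_of_pos (by linarith)
  have f1 : (0:ℝ) < (Nat.factorial (n - k) : ℝ) := by exact_mod_cast (Nat.factorial_pos _)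
  have f2 : (0:ℝ) < (Nat.factorial k : ℝ) := by exact_mod_cast (Nat.factorial_pos _)
  exact mul_pos (div_pos g1 (mul_pos g2 f1)) (div_pos g3 (mul_pos g4 f2))

lemma jp_natDegree_le (a b : ℝ) (n : ℕ) : (jp a b n).natDegree ≤ n := by
  refine (natDegree_mul_le).trans ?_
  simp only [natDegree_C, zero_add]
  refine (natDegree_sum_le _ _).trans ?_
  rw [Finset.fold_max_le]
  refine ⟨Nat.zero_le _, fun k hk => ?_⟩
  rw [Finset.mem_range] at hk
  refine (natDegree_mul_le).trans ?_
  have h1 : (Polynomial.C (cf a b n k) * (X - Polynomial.C 1 : Polynomial ℝ) ^ k).natDegree ≤ k := by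
    refine (natDegree_mul_le).trans ?_
    have := natDegree_pow_le (p := (X - Polynomial.C 1 : Polynomial ℝ)) (n := k)
    have h2 := natDegree_X_sub_C_le (1:ℝ)
    have := Nat.mul_le_mul_left k h2
    simp only [natDegree_C, zero_add]
    omega
  have h2 : ((X + Polynomial.C 1 : Polynomial ℝ) ^ (n - k)).natDegree ≤ n - k := by
    refine (natDegree_pow_le).trans ?_
    have h3 : (X + Polynomial.C 1 : Polynomial ℝ).natDegree ≤ 1 := by
      simpa using natDegree_add_le (X : Polynomial ℝ) (Polynomial.C 1)
    have := Nat.mul_le_mul_left (n - k) h3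
    omega
  omega

lemma jp_coeff_n {a b : ℝ} (ha : -1 < a) (hb : -1 < b) (n : ℕ) :
    0 < (jp a b n).coeff n := by
  have hmon : ∀ k ∈ Finset.range (n+1),
      ((Polynomial.C (cf a b n k) * (X - Polynomial.C 1) ^ k * (X + Polynomial.C 1) ^ (n - k)
          : Polynomial ℝ)).coeff n = cf a b n k := by
    intro k hk
    rw [Finset.mem_range, Nat.lt_succ_iff] at hk
    have hm : ((X - Polynomial.C 1 : Polynomial ℝ) ^ k * (X + Polynomial.C 1) ^ (n - k)).Monic :=
      ((monic_X_sub_C (1:ℝ)).pow k).mul (((monic_X_add_C (1:ℝ))).pow (n - k))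
    have hdeg : ((X - Polynomial.C 1 : Polynomial ℝ) ^ k * (X + Polynomial.C 1) ^ (n - k)).natDegree = n := by
      rw [Polynomial.Monic.natDegree_mul ((monic_X_sub_C (1:ℝ)).pow k) ((monic_X_add_C (1:ℝ)).pow (n-k)),
        natDegree_pow, natDegree_pow, natDegree_X_sub_C, natDegree_X_add_C]
      omega
    have hc := hm.coeff_natDegree
    rw [hdeg] at hc
    rw [mul_assoc, coeff_C_mul, hc, mul_one]
  rw [jp, coeff_C_mul, finset_sum_coeff, Finset.sum_congr rfl hmon]
  have h : 0 < ∑ k ∈ Finset.range (n+1), cf a b n k :=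
    Finset.sum_pos (fun k _ => cf_pos ha hb n k) ⟨0, by simp⟩
  positivity

lemma jp_ne_zero {a b : ℝ} (ha : -1 < a) (hb : -1 < b) (n : ℕ) : jp a b n ≠ 0 := by
  intro h
  have := jp_coeff_n ha hb n
  rw [h] at this
  simp at this

lemma jp_natDegree {a b : ℝ} (ha : -1 < a) (hb : -1 < b) (n : ℕ) :
    (jp a b n).natDegree = n :=
  le_antisymm (jp_natDegree_le a b n) (le_natDegree_of_ne_zero (ne_of_gt (jp_coeff_n ha hb n)))

noncomputable def Gc (a b : ℝ) (n j i : ℕ) : ℝ :=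
  (j.choose i : ℝ) * (-1)^i * (Real.Gamma (a + n + 1) / Real.Gamma (a + n + 1 - i)) *
  (Real.Gamma (b + n + 1) / Real.Gamma (b + n - j + i + 1))

noncomputable def G (a b : ℝ) (n j : ℕ) (x : ℝ) : ℝ :=
  ∑ i ∈ Finset.range (j+1),
    Gc a b n j i * (1 - x) ^ (a + n - i) * (1 + x) ^ (b + n - j + i)

lemma Gc_eq_zero (a b : ℝ) (n : ℕ) {j i : ℕ} (h : j < i) : Gc a b n j i = 0 := by
  simp [Gc, Nat.choose_eq_zero_of_lt h]

lemma Gc_succ_succ {a b : ℝ} (ha : -1 < a) (hb : -1 < b) {n j i : ℕ} (hj : j < n) (hi : i ≤ j) :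
    Gc a b n (j+1) (i+1)
      = -(a + n - i) * Gc a b n j i + (b + n - j + i + 1) * Gc a b n j (i+1) := by
  have hin : (i:ℝ) ≤ (j:ℝ) := by exact_mod_cast hi
  have hjn : (j:ℝ) + 1 ≤ (n:ℝ) := by exact_mod_cast hj
  have hA : (0:ℝ) < a + n - i := by linarith
  have hB : (0:ℝ) < b + n - j + i + 1 := by linarith
  unfold Gc
  push_cast [Nat.choose_succ_succ j i]
  rw [show a + (n:ℝ) + 1 - ((i:ℝ)+1) = (a + n - i) by ring]
  rw [show b + (n:ℝ) - ((j:ℝ)+1) + ((i:ℝ)+1) + 1 = b + n - j + i + 1 by ring]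
  rw [show a + (n:ℝ) + 1 - (i:ℝ) = (a + n - i) + 1 by ring]
  rw [show b + (n:ℝ) - (j:ℝ) + ((i:ℝ)+1) + 1 = (b + n - j + i + 1) + 1 by ring]
  rw [Real.Gamma_add_one (ne_of_gt hA), Real.Gamma_add_one (ne_of_gt hB)]
  have g1 : Real.Gamma (a + ↑n - ↑i) ≠ 0 := ne_of_gt (Real.Gamma_pos_of_pos hA)
  have g2 : Real.Gamma (b + ↑n - ↑j + ↑i + 1) ≠ 0 := ne_of_gt (Real.Gamma_pos_of_pos hB)
  set x1 := Real.Gamma (a + ↑n - ↑i)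
  set x2 := Real.Gamma (b + ↑n - ↑j + ↑i + 1)
  set y1 := Real.Gamma (a + ↑n + 1)
  set y2 := Real.Gamma (b + ↑n + 1)
  field_simp
  ring

lemma Gc_succ_zero {a b : ℝ} (ha : -1 < a) (hb : -1 < b) {n j : ℕ} (hj : j < n) :
    Gc a b n (j+1) 0 = (b + n - j) * Gc a b n j 0 := by
  have hjn : (j:ℝ) + 1 ≤ (n:ℝ) := by exact_mod_cast hj
  have hB : (0:ℝ) < b + n - j := by linarith
  have hA1 : (0:ℝ) < a + n + 1 := by linarith
  unfold Gc
  push_cast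
  rw [show a + (n:ℝ) + 1 - 0 = a + n + 1 by ring]
  rw [show b + (n:ℝ) - ((j:ℝ)+1) + 0 + 1 = b + n - j by ring]
  rw [show b + (n:ℝ) - (j:ℝ) + 0 + 1 = (b + n - j) + 1 by ring]
  rw [Real.Gamma_add_one (ne_of_gt hB)]
  have g2 : Real.Gamma (b + ↑n - ↑j) ≠ 0 := ne_of_gt (Real.Gamma_pos_of_pos hB)
  set x2 := Real.Gamma (b + ↑n - ↑j)
  have g1 : Real.Gamma (a + ↑n + 1) ≠ 0 := ne_of_gt (Real.Gamma_pos_of_pos hA1)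
  set y1 := Real.Gamma (a + ↑n + 1)
  set y2 := Real.Gamma (b + ↑n + 1)
  have hBne : (b + (n:ℝ) - j) ≠ 0 := ne_of_gt hB
  field_simp
  simp only [Nat.choose_zero_right, Nat.cast_one]
  ring

lemma G_hasDerivAt {a b : ℝ} (ha : -1 < a) (hb : -1 < b) {n j : ℕ} (hj : j < n) {x : ℝ}
    (hx : x ∈ Set.Ioo (-1:ℝ) 1) :
    HasDerivAt (G a b n j) (G a b n (j+1) x) x := by
  obtain ⟨hx1, hx2⟩ := hx
  have h1x : (0:ℝ) < 1 - x := by linarith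
  have h2x : (0:ℝ) < 1 + x := by linarith
  set T : ℕ → ℝ := fun i => (1 - x) ^ (a + n - i) * (1 + x) ^ (b + n - j - 1 + i) with hT
  have key : ∀ i ∈ Finset.range (j+1),
      HasDerivAt (fun y => Gc a b n j i * (1 - y) ^ (a + n - i) * (1 + y) ^ (b + n - j + i))
        (Gc a b n j i * (-(a + n - i)) * T (i+1) + Gc a b n j i * (b + n - j + i) * T i) x := by
    intro i _
    have d1 : HasDerivAt (fun y : ℝ => (1 - y) ^ (a + n - i))
        ((a + n - i) * (1 - x) ^ (a + n - i - 1) * (-1)) x := by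
      have h := Real.hasDerivAt_rpow_const (x := 1 - x) (p := a + n - i) (Or.inl (ne_of_gt h1x))
      have h2 : HasDerivAt (fun y : ℝ => 1 - y) (-1) x := (hasDerivAt_id x).const_sub 1
      exact h.comp x h2
    have d2 : HasDerivAt (fun y : ℝ => (1 + y) ^ (b + n - j + i))
        ((b + n - j + i) * (1 + x) ^ (b + n - j + i - 1) * 1) x := by
      have h := Real.hasDerivAt_rpow_const (x := 1 + x) (p := b + n - j + i) (Or.inl (ne_of_gt h2x))
      have h2 : HasDerivAt (fun y : ℝ => 1 + y) 1 x := (hasDerivAt_id x).const_add 1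
      exact h.comp x h2
    have hprod := (d1.const_mul (Gc a b n j i)).mul d2
    refine hprod.congr_deriv (Eq.symm ?_)
    simp only [hT]
    rw [show (a + (n:ℝ) - (↑(i+1):ℝ)) = a + n - i - 1 by push_cast; ring]
    rw [show (b + (n:ℝ) - (j:ℝ) - 1 + (↑(i+1):ℝ)) = b + n - j + i by push_cast; ring]
    rw [show (b + (n:ℝ) - (j:ℝ) - 1 + (i:ℝ)) = b + n - j + i - 1 by ring]
    ring
  have hsum := HasDerivAt.fun_sum key
  have hfun : G a b n j = fun y => ∑ i ∈ Finset.range (j+1),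
      Gc a b n j i * (1 - y) ^ (a + n - i) * (1 + y) ^ (b + n - j + i) := rfl
  rw [hfun]
  refine hsum.congr_deriv (Eq.symm ?_)
  -- value identity
  have hBtop : Gc a b n j (j+1) * (b + n - j + (↑(j+1):ℝ)) * T (j+1) = 0 := by
    rw [Gc_eq_zero a b n (Nat.lt_succ_self j)]; ring
  have hGrw : G a b n (j+1) x = ∑ i ∈ Finset.range (j+2), Gc a b n (j+1) i * T i := by
    unfold G
    refine Finset.sum_congr rfl (fun i _ => ?_)
    rw [hT]
    rw [show (b + (n:ℝ) - (↑(j+1):ℝ) + (i:ℝ)) = b + n - j - 1 + i by push_cast; ring]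
    ring
  rw [hGrw, Finset.sum_range_succ' (fun i => Gc a b n (j+1) i * T i) (j+1)]
  rw [Finset.sum_add_distrib]
  have hsplit2 : ∑ i ∈ Finset.range (j+1), Gc a b n j i * (b + n - j + i) * T i
      = (∑ i ∈ Finset.range (j+1), Gc a b n j (i+1) * (b + n - j + (↑(i+1):ℝ)) * T (i+1))
        + Gc a b n j 0 * (b + n - j + (↑(0:ℕ):ℝ)) * T 0 := by
    rw [Finset.sum_range_succ (fun i => Gc a b n j (i+1) * (b + n - j + (↑(i+1):ℝ)) * T (i+1)) j]
    rw [hBtop, add_zero]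
    exact Finset.sum_range_succ' (fun i => Gc a b n j i * (b + n - j + (i:ℝ)) * T i) j
  rw [hsplit2, ← add_assoc, ← Finset.sum_add_distrib]
  congr 1
  · refine Finset.sum_congr rfl (fun i hi => ?_)
    rw [Finset.mem_range, Nat.lt_succ_iff] at hi
    rw [Gc_succ_succ ha hb hj hi]
    push_cast
    ring
  · rw [Gc_succ_zero ha hb hj]
    push_cast
    ring
lemma cont_one_sub_rpow {p : ℝ} (hp : 0 < p) : Continuous (fun x : ℝ => (1 - x) ^ p) := by
  rw [continuous_iff_continuousAt]
  intro x
  exact (Real.continuousAt_rpow_const (1 - x) p (Or.inr hp.le)).comp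
    ((continuous_const.sub continuous_id).continuousAt)

lemma cont_one_add_rpow {p : ℝ} (hp : 0 < p) : Continuous (fun x : ℝ => (1 + x) ^ p) := by
  rw [continuous_iff_continuousAt]
  intro x
  exact (Real.continuousAt_rpow_const (1 + x) p (Or.inr hp.le)).comp
    ((continuous_const.add continuous_id).continuousAt)

lemma G_continuous {a b : ℝ} (ha : -1 < a) (hb : -1 < b) {n j : ℕ} (hj : j < n) :
    Continuous (G a b n j) := by
  have : (G a b n j) = fun x => ∑ i ∈ Finset.range (j+1),
      Gc a b n j i * (1 - x) ^ (a + n - i) * (1 + x) ^ (b + n - j + i) := rfl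
  rw [this]
  refine continuous_finset_sum _ (fun i hi => ?_)
  rw [Finset.mem_range, Nat.lt_succ_iff] at hi
  have hin : (i:ℝ) ≤ (j:ℝ) := by exact_mod_cast hi
  have hjn : (j:ℝ) + 1 ≤ (n:ℝ) := by exact_mod_cast hj
  have hp : (0:ℝ) < a + n - i := by linarith
  have hq : (0:ℝ) < b + n - j + i := by linarith
  exact (continuous_const.mul (cont_one_sub_rpow hp)).mul (cont_one_add_rpow hq)

lemma G_one {a b : ℝ} (ha : -1 < a) {n j : ℕ} (hj : j < n) : G a b n j 1 = 0 := by
  unfold G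
  refine Finset.sum_eq_zero (fun i hi => ?_)
  rw [Finset.mem_range, Nat.lt_succ_iff] at hi
  have hin : (i:ℝ) ≤ (j:ℝ) := by exact_mod_cast hi
  have hjn : (j:ℝ) + 1 ≤ (n:ℝ) := by exact_mod_cast hj
  have hp : (0:ℝ) < a + n - i := by linarith
  rw [show (1:ℝ) - 1 = 0 by ring, Real.zero_rpow (ne_of_gt hp)]
  ring

lemma G_neg_one {a b : ℝ} (hb : -1 < b) {n j : ℕ} (hj : j < n) : G a b n j (-1) = 0 := by
  unfold G
  refine Finset.sum_eq_zero (fun i hi => ?_)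
  rw [Finset.mem_range, Nat.lt_succ_iff] at hi
  have hin : (i:ℝ) ≤ (j:ℝ) := by exact_mod_cast hi
  have hjn : (j:ℝ) + 1 ≤ (n:ℝ) := by exact_mod_cast hj
  have hq : (0:ℝ) < b + n - j + i := by linarith
  rw [show (1:ℝ) + (-1) = 0 by ring, Real.zero_rpow (ne_of_gt hq)]
  ring

lemma intervalIntegrable_term {p q : ℝ} (hp : -1 < p) (hq : -1 < q) {f : ℝ → ℝ}
    (hf : Continuous f) :
    IntervalIntegrable (fun x => (1 - x) ^ p * (1 + x) ^ q * f x) volume (-1) 1 := by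
  have base : IntervalIntegrable (fun x : ℝ => x ^ q) volume 0 1 := intervalIntegrable_rpow' hq
  have baseP : IntervalIntegrable (fun x : ℝ => x ^ p) volume 0 1 := intervalIntegrable_rpow' hp
  have i1 : IntervalIntegrable (fun x : ℝ => (1 + x) ^ q) volume (-1) 0 := by
    have := base.comp_add_right 1
    simpa [add_comm] using this
  have i2 : IntervalIntegrable (fun x : ℝ => (1 - x) ^ p) volume 0 1 := by
    have := baseP.comp_sub_left 1
    simpa using this.symm
  have c1 : ContinuousOn (fun x : ℝ => (1 - x) ^ p * f x) (Set.uIcc (-1 : ℝ) 0) := by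
    refine ContinuousOn.mul ?_ hf.continuousOn
    intro x hx
    rw [Set.uIcc_of_le (by norm_num : (-1:ℝ) ≤ 0)] at hx
    have : (1:ℝ) - x ≠ 0 := by
      have := hx.2; intro h; nlinarith [hx.1]
    exact ((Real.continuousAt_rpow_const (1 - x) p (Or.inl this)).comp
      ((continuous_const.sub continuous_id).continuousAt)).continuousWithinAt
  have c2 : ContinuousOn (fun x : ℝ => (1 + x) ^ q * f x) (Set.uIcc (0 : ℝ) 1) := by
    refine ContinuousOn.mul ?_ hf.continuousOn
    intro x hx
    rw [Set.uIcc_of_le (by norm_num : (0:ℝ) ≤ 1)] at hx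
    have : (1:ℝ) + x ≠ 0 := by
      have := hx.1; intro h; nlinarith
    exact ((Real.continuousAt_rpow_const (1 + x) q (Or.inl this)).comp
      ((continuous_const.add continuous_id).continuousAt)).continuousWithinAt
  have h1 : IntervalIntegrable (fun x => (1 - x) ^ p * (1 + x) ^ q * f x) volume (-1) 0 := by
    have := i1.continuousOn_mul c1
    have heq : (fun x : ℝ => ((1 - x) ^ p * f x) * (1 + x) ^ q)
        = fun x : ℝ => (1 - x) ^ p * (1 + x) ^ q * f x := by funext x; ring
    rwa [heq] at this
  have h2 : IntervalIntegrable (fun x => (1 - x) ^ p * (1 + x) ^ q * f x) volume 0 1 := by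
    have := i2.continuousOn_mul c2
    have heq : (fun x : ℝ => ((1 + x) ^ q * f x) * (1 - x) ^ p)
        = fun x : ℝ => (1 - x) ^ p * (1 + x) ^ q * f x := by funext x; ring
    rwa [heq] at this
  exact h1.trans h2

lemma G_mul_intervalIntegrable {a b : ℝ} (ha : -1 < a) (hb : -1 < b) {n j : ℕ} (hj : j ≤ n)
    {f : ℝ → ℝ} (hf : Continuous f) :
    IntervalIntegrable (fun x => G a b n j x * f x) volume (-1) 1 := by
  have hterm : ∀ i ∈ Finset.range (j+1), IntervalIntegrable
      (fun x => Gc a b n j i * ((1 - x) ^ (a + n - i) * (1 + x) ^ (b + n - j + i) * f x))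
      volume (-1) 1 := by
    intro i hi
    rw [Finset.mem_range, Nat.lt_succ_iff] at hi
    have hin : (i:ℝ) ≤ (j:ℝ) := by exact_mod_cast hi
    have hjn : (j:ℝ) ≤ (n:ℝ) := by exact_mod_cast hj
    have hp : (-1:ℝ) < a + n - i := by linarith
    have hq : (-1:ℝ) < b + n - j + i := by linarith
    exact (intervalIntegrable_term hp hq hf).const_mul _
  have hsum := IntervalIntegrable.sum (Finset.range (j+1)) hterm
  have heq : (fun x => G a b n j x * f x) = (fun x => ∑ i ∈ Finset.range (j+1),
      Gc a b n j i * ((1 - x) ^ (a + n - i) * (1 + x) ^ (b + n - j + i) * f x)) := by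
    funext x
    rw [G, Finset.sum_mul]
    exact Finset.sum_congr rfl (fun i _ => by ring)
  rw [heq, ← Finset.sum_fn]
  exact hsum
lemma FTC_step {a b : ℝ} (ha : -1 < a) (hb : -1 < b) {n j : ℕ} (hj : j < n) (q : Polynomial ℝ) :
    ∫ x in (-1:ℝ)..1, G a b n (j+1) x * q.eval x
      = - ∫ x in (-1:ℝ)..1, G a b n j x * q.derivative.eval x := by
  have hder : ∀ x ∈ Set.Ioo (-1:ℝ) 1, HasDerivAt (fun y => G a b n j y * q.eval y)
      (G a b n (j+1) x * q.eval x + G a b n j x * q.derivative.eval x) x := fun x hx =>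
    (G_hasDerivAt ha hb hj hx).mul (q.hasDerivAt x)
  have hi1 : IntervalIntegrable (fun x => G a b n (j+1) x * q.eval x) volume (-1) 1 :=
    G_mul_intervalIntegrable ha hb (by omega) q.continuous
  have hi2 : IntervalIntegrable (fun x => G a b n j x * q.derivative.eval x) volume (-1) 1 :=
    G_mul_intervalIntegrable ha hb (by omega) q.derivative.continuous
  have hcont : ContinuousOn (fun y => G a b n j y * q.eval y) (Set.Icc (-1:ℝ) 1) :=
    ((G_continuous ha hb hj).mul q.continuous).continuousOn
  have hftc := intervalIntegral.integral_eq_sub_of_hasDerivAt_of_le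
    (by norm_num : (-1:ℝ) ≤ 1) hcont hder (hi1.add hi2)
  rw [G_one ha hj, G_neg_one hb hj] at hftc
  rw [intervalIntegral.integral_add hi1 hi2] at hftc
  simp only [zero_mul, sub_zero] at hftc
  linarith [hftc]

lemma G_integral_zero {a b : ℝ} (ha : -1 < a) (hb : -1 < b) {n : ℕ} :
    ∀ j, j ≤ n → ∀ q : Polynomial ℝ, (q = 0 ∨ q.natDegree < j) →
      ∫ x in (-1:ℝ)..1, G a b n j x * q.eval x = 0 := by
  intro j
  induction j with
  | zero =>
    intro _ q hq
    rcases hq with h | h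
    · simp [h]
    · omega
  | succ j ih =>
    intro hjn q hq
    rcases hq with h | h
    · simp [h]
    · rw [FTC_step ha hb (by omega) q]
      rw [ih (by omega) q.derivative ?_]
      · ring
      · by_cases hq0 : q.derivative = 0
        · exact Or.inl hq0
        · right
          have := Polynomial.natDegree_derivative_lt (p := q) ?_
          · omega
          · intro h0
            rw [Polynomial.eq_C_of_natDegree_eq_zero h0] at hq0
            simp at hq0
lemma rodrigues {a b : ℝ} (ha : -1 < a) (hb : -1 < b) (n : ℕ) {x : ℝ}
    (hx : x ∈ Set.Ioo (-1:ℝ) 1) :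
    (1 - x) ^ a * (1 + x) ^ b * jacobiPNat n a b x
      = ((-1:ℝ)^n / (2^n * n.factorial)) * G a b n n x := by
  obtain ⟨hx1, hx2⟩ := hx
  have h1x : (0:ℝ) < 1 - x := by linarith
  have h2x : (0:ℝ) < 1 + x := by linarith
  unfold jacobiPNat G
  rw [← Finset.sum_range_reflect
    (fun i => Gc a b n n i * (1 - x) ^ (a + n - i) * (1 + x) ^ (b + n - n + i)) (n+1)]
  rw [Finset.mul_sum, Finset.mul_sum, Finset.mul_sum]
  refine Finset.sum_congr rfl (fun k hk => ?_)
  rw [Finset.mem_range, Nat.lt_succ_iff] at hk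
  simp only [Nat.add_sub_cancel]
  have hc : ((n-k:ℕ):ℝ) = (n:ℝ) - (k:ℝ) := Nat.cast_sub hk
  rw [show a + (n:ℝ) - ((n-k:ℕ):ℝ) = a + k by rw [hc]; ring]
  rw [show b + (n:ℝ) - (n:ℝ) + ((n-k:ℕ):ℝ) = b + ((n-k:ℕ):ℝ) by ring]
  unfold Gc
  rw [show a + (n:ℝ) + 1 - ((n-k:ℕ):ℝ) = (k:ℝ) + a + 1 by rw [hc]; ring]
  rw [show b + (n:ℝ) - (n:ℝ) + ((n-k:ℕ):ℝ) + 1 = ((n-k:ℕ):ℝ) + b + 1 by ring]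
  rw [show a + (n:ℝ) + 1 = (n:ℝ) + a + 1 by ring, show b + (n:ℝ) + 1 = (n:ℝ) + b + 1 by ring]
  rw [Nat.choose_symm hk, Nat.cast_choose ℝ hk]
  -- convert nat powers to rpow
  rw [show x - 1 = -(1 - x) by ring, neg_pow, show x + 1 = 1 + x by ring]
  rw [← Real.rpow_natCast (1 - x) k, ← Real.rpow_natCast (1 + x) (n - k)]
  have e1 : (1 - x) ^ a * ((-1:ℝ)^k * (1 - x) ^ (k:ℝ)) = (-1:ℝ)^k * (1 - x) ^ (a + (k:ℝ)) := by
    rw [Real.rpow_add h1x]; ring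
  have e2 : (1 + x) ^ b * (1 + x) ^ (((n - k : ℕ) : ℝ)) = (1 + x) ^ (b + ((n - k : ℕ) : ℝ)) := by
    rw [Real.rpow_add h2x]
  -- sign identity
  have hsign : (-1:ℝ)^n * (-1:ℝ)^(n-k) = (-1:ℝ)^k := by
    rw [← pow_add, show n + (n - k) = 2*(n-k) + k by omega, pow_add, pow_mul]
    norm_num
  have gk : Real.Gamma ((k:ℝ) + a + 1) ≠ 0 :=
    ne_of_gt (Real.Gamma_pos_of_pos (by linarith [Nat.cast_nonneg (α := ℝ) k]))
  have gnk : Real.Gamma (((n - k : ℕ) : ℝ) + b + 1) ≠ 0 :=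
    ne_of_gt (Real.Gamma_pos_of_pos (by linarith [Nat.cast_nonneg (α := ℝ) (n-k)]))
  have fk : ((k.factorial : ℝ)) ≠ 0 := by exact_mod_cast k.factorial_ne_zero
  have fnk : (((n-k).factorial : ℝ)) ≠ 0 := by exact_mod_cast (n-k).factorial_ne_zero
  have fn : ((n.factorial : ℝ)) ≠ 0 := by exact_mod_cast n.factorial_ne_zero
  have h2n : ((2:ℝ)^n) ≠ 0 := by positivity
  set A1 := Real.Gamma ((n:ℝ) + a + 1)
  set A2 := Real.Gamma ((k:ℝ) + a + 1)
  set B1 := Real.Gamma ((n:ℝ) + b + 1)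
  set B2 := Real.Gamma (((n - k : ℕ) : ℝ) + b + 1)
  set R1 := (1 - x) ^ (a + (k:ℝ))
  set R2 := (1 + x) ^ (b + ((n - k : ℕ) : ℝ))
  set S1 := (1 - x) ^ a
  set S2 := (1 + x) ^ b
  set T1 := (1 - x) ^ (k:ℝ)
  set T2 := (1 + x) ^ (((n - k : ℕ) : ℝ))
  have e1' : S1 * T1 = R1 := by
    simp only [S1, T1, R1, Real.rpow_add h1x]
    try ring
  have e2' : S2 * T2 = R2 := by
    simp only [S2, T2, R2, Real.rpow_add h2x]
  field_simp
  rw [← e1', ← e2', ← hsign]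
  ring
lemma orth {a b : ℝ} (ha : -1 < a) (hb : -1 < b) {n : ℕ} (q : Polynomial ℝ)
    (hq : q.natDegree < n) :
    ∫ x in (-1:ℝ)..1, (1 - x) ^ a * (1 + x) ^ b * (jacobiPNat n a b x * q.eval x) = 0 := by
  have key := G_integral_zero ha hb n le_rfl q (Or.inr hq)
  rw [intervalIntegral.integral_of_le (by norm_num : (-1:ℝ) ≤ 1)] at key ⊢
  rw [MeasureTheory.integral_Ioc_eq_integral_Ioo] at key ⊢
  have congr1 : ∀ x ∈ Set.Ioo (-1:ℝ) 1,
      (1 - x) ^ a * (1 + x) ^ b * (jacobiPNat n a b x * q.eval x)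
      = ((-1:ℝ)^n / (2^n * n.factorial)) * (G a b n n x * q.eval x) := by
    intro x hx
    have h := rodrigues ha hb n hx
    calc (1 - x) ^ a * (1 + x) ^ b * (jacobiPNat n a b x * q.eval x)
        = ((1 - x) ^ a * (1 + x) ^ b * jacobiPNat n a b x) * q.eval x := by ring
      _ = (((-1:ℝ)^n / (2^n * n.factorial)) * G a b n n x) * q.eval x := by rw [h]
      _ = ((-1:ℝ)^n / (2^n * n.factorial)) * (G a b n n x * q.eval x) := by ring
  rw [MeasureTheory.setIntegral_congr_fun measurableSet_Ioo congr1,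
    MeasureTheory.integral_const_mul, key, mul_zero]

lemma integral_pos_aux {f : ℝ → ℝ} (hint : IntervalIntegrable f volume (-1) 1)
    (hnn : ∀ x ∈ Set.Ioo (-1:ℝ) 1, 0 ≤ f x)
    {S : Set ℝ} (hS : S.Finite) (hne : ∀ x ∈ Set.Ioo (-1:ℝ) 1 \ S, f x ≠ 0) :
    0 < ∫ x in (-1:ℝ)..1, f x := by
  rw [intervalIntegral.integral_of_le (by norm_num : (-1:ℝ) ≤ 1),
    MeasureTheory.integral_Ioc_eq_integral_Ioo]
  have hio : IntegrableOn f (Set.Ioo (-1:ℝ) 1) volume := by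
    have := (intervalIntegrable_iff_integrableOn_Ioc_of_le (by norm_num : (-1:ℝ) ≤ 1)).1 hint
    exact this.mono_set Set.Ioo_subset_Ioc_self
  have hae : 0 ≤ᵐ[volume.restrict (Set.Ioo (-1:ℝ) 1)] f := by
    rw [Filter.EventuallyLE, MeasureTheory.ae_restrict_iff' measurableSet_Ioo]
    exact MeasureTheory.ae_of_all _ hnn
  rw [MeasureTheory.setIntegral_pos_iff_support_of_nonneg_ae hae hio]
  have hsub : Set.Ioo (-1:ℝ) 1 \ S ⊆ Function.support f ∩ Set.Ioo (-1:ℝ) 1 := by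
    intro x hx
    exact ⟨hne x hx, hx.1⟩
  refine lt_of_lt_of_le ?_ (measure_mono hsub)
  have hdiff : volume (Set.Ioo (-1:ℝ) 1 \ S) = volume (Set.Ioo (-1:ℝ) 1) := by
    exact MeasureTheory.measure_diff_null (hS.measure_zero volume)
  rw [hdiff, Real.volume_Ioo]
  norm_num

lemma poly_sign {v : Polynomial ℝ} (hvne : ∀ x : ℝ, v.eval x ≠ 0) (x y : ℝ) :
    0 < v.eval x * v.eval y := by
  have hiv : ∀ s t : ℝ, v.eval s < 0 → 0 < v.eval t → False := by
    intro s t hs ht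
    rcases le_total s t with h | h
    · have := intermediate_value_Icc h v.continuous.continuousOn (by constructor <;> linarith :
        (0:ℝ) ∈ Set.Icc (v.eval s) (v.eval t))
      obtain ⟨z, _, hz⟩ := this
      exact hvne z hz
    · have := intermediate_value_Icc' h v.continuous.continuousOn (by constructor <;> linarith :
        (0:ℝ) ∈ Set.Icc (v.eval s) (v.eval t))
      obtain ⟨z, _, hz⟩ := this
      exact hvne z hz
  rcases (hvne x).lt_or_gt with hx | hx <;> rcases (hvne y).lt_or_gt with hy | hy
  · exact mul_pos_of_neg_of_neg hx hy
  · exact absurd (hiv x y hx hy) not_false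
  · exact absurd (hiv y x hy hx) not_false
  · exact mul_pos hx hy
end JacAux

/-- for `a, b > −1` and `n ≥ 1`, the Jacobi polynomial `P_n^{(a,b)}`
has exactly `n` real roots, all simple and lying in `(−1,1)`. -/
theorem jacobi_roots_simple_in_Ioo (a b : ℝ) (ha : -1 < a) (hb : -1 < b) (n : ℕ) (hn : 1 ≤ n) :
    ∃ ξ : Fin n → ℝ, Function.Injective ξ ∧
      (∀ i, ξ i ∈ Set.Ioo (-1 : ℝ) 1 ∧ jacobiPNat n a b (ξ i) = 0 ∧
        deriv (fun τ => jacobiPNat n a b τ) (ξ i) ≠ 0) ∧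
      (∀ x : ℝ, jacobiPNat n a b x = 0 → ∃ i, x = ξ i) := by
  classical
  set p : Polynomial ℝ := JacAux.jp a b n with hp
  have hpe : ∀ x, p.eval x = jacobiPNat n a b x := JacAux.jp_eval a b n
  have hp0 : p ≠ 0 := JacAux.jp_ne_zero ha hb n
  have hpdeg : p.natDegree = n := JacAux.jp_natDegree ha hb n
  set F : Finset ℝ := p.roots.toFinset with hF
  set T : Finset ℝ := F.filter (fun r => r ∈ Set.Ioo (-1:ℝ) 1 ∧ Odd (p.rootMultiplicity r))
    with hTdef
  set q : Polynomial ℝ := ∏ r ∈ T, (Polynomial.X - Polynomial.C r) with hq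
  have hq0 : q ≠ 0 :=
    Finset.prod_ne_zero_iff.2 (fun r _ => Polynomial.X_sub_C_ne_zero r)
  have hqdeg : q.natDegree = T.card := by
    rw [hq, Polynomial.natDegree_prod _ _ (fun r _ => Polynomial.X_sub_C_ne_zero r)]
    simp [Polynomial.natDegree_X_sub_C]
  obtain ⟨v, hv⟩ := p.prod_multiset_X_sub_C_dvd
  have hv0 : v ≠ 0 := by intro h; rw [h, mul_zero] at hv; exact hp0 hv
  have hvroots : v.roots = 0 := by
    have hmul := Polynomial.roots_mul (hv ▸ hp0)
    rw [← hv, Polynomial.roots_multiset_prod_X_sub_C] at hmul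
    exact (left_eq_add.mp hmul)
  have hvne : ∀ x : ℝ, v.eval x ≠ 0 := by
    intro x hx
    have hmem : x ∈ v.roots := Polynomial.mem_roots'.2 ⟨hv0, hx⟩
    rw [hvroots] at hmem
    exact Multiset.notMem_zero x hmem
  have hMeval : ∀ x : ℝ, ((p.roots.map fun r => Polynomial.X - Polynomial.C r).prod).eval x
      = ∏ r ∈ F, (x - r) ^ (p.rootMultiplicity r) := by
    intro x
    rw [Polynomial.eval_multiset_prod, Multiset.map_map]
    have : ((fun q : Polynomial ℝ => q.eval x) ∘ fun r => Polynomial.X - Polynomial.C r)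
        = fun r : ℝ => x - r := by funext r; simp
    rw [this, Finset.prod_multiset_map_count]
    exact Finset.prod_congr rfl (fun r _ => by rw [Polynomial.count_roots])
  have hpeval : ∀ x : ℝ, p.eval x
      = (∏ r ∈ F, (x - r) ^ (p.rootMultiplicity r)) * v.eval x := by
    intro x
    conv_lhs => rw [hv]
    rw [Polynomial.eval_mul, hMeval]
  have hqeval : ∀ x : ℝ, q.eval x = ∏ r ∈ T, (x - r) := by
    intro x; rw [hq, Polynomial.eval_prod]; simp
  set e : ℝ → ℕ := fun r => p.rootMultiplicity r + (if r ∈ T then 1 else 0) with he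
  have hcomb : ∀ x : ℝ, p.eval x * q.eval x = v.eval x * ∏ r ∈ F, (x - r) ^ (e r) := by
    intro x
    have h2 : ∏ r ∈ F, (x - r) ^ (e r)
        = (∏ r ∈ F, (x - r) ^ p.rootMultiplicity r) * ∏ r ∈ T, (x - r) := by
      have step1 : ∏ r ∈ F, (x - r) ^ (e r)
          = ∏ r ∈ F, ((x - r) ^ p.rootMultiplicity r * (x - r) ^ (if r ∈ T then 1 else 0)) :=
        Finset.prod_congr rfl (fun r _ => by rw [he]; rw [pow_add])
      rw [step1, Finset.prod_mul_distrib]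
      congr 1
      have step2 : ∀ r ∈ F, (x - r) ^ (if r ∈ T then 1 else 0)
          = (if (r ∈ Set.Ioo (-1:ℝ) 1 ∧ Odd (p.rootMultiplicity r)) then (x - r) else 1) := by
        intro r hr
        by_cases hmem : r ∈ Set.Ioo (-1:ℝ) 1 ∧ Odd (p.rootMultiplicity r)
        · have : r ∈ T := by rw [hTdef, Finset.mem_filter]; exact ⟨hr, hmem⟩
          simp [this, hmem]
        · have hnT : r ∉ T := by rw [hTdef, Finset.mem_filter]; tauto
          rw [if_neg hnT, pow_zero, if_neg hmem]
      rw [Finset.prod_congr rfl step2, ← Finset.prod_filter]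
    rw [hpeval, hqeval, h2]; ring
  have hsign : ∀ x ∈ Set.Ioo (-1:ℝ) 1, ∀ y ∈ Set.Ioo (-1:ℝ) 1,
      0 ≤ (p.eval x * q.eval x) * (p.eval y * q.eval y) := by
    intro x hx y hy
    rw [hcomb x, hcomb y]
    have hre : (v.eval x * ∏ r ∈ F, (x - r) ^ (e r)) * (v.eval y * ∏ r ∈ F, (y - r) ^ (e r))
        = (v.eval x * v.eval y) * ∏ r ∈ F, ((x - r) * (y - r)) ^ (e r) := by
      rw [Finset.prod_congr rfl (fun r (_ : r ∈ F) => (mul_pow (x - r) (y - r) (e r)))]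
      rw [Finset.prod_mul_distrib]
      ring
    rw [hre]
    refine mul_nonneg (le_of_lt (JacAux.poly_sign hvne x y)) (Finset.prod_nonneg fun r hr => ?_)
    by_cases hrIoo : r ∈ Set.Ioo (-1:ℝ) 1
    · have heven : Even (e r) := by
        rw [he]
        by_cases hodd : Odd (p.rootMultiplicity r)
        · have hrT : r ∈ T := by rw [hTdef, Finset.mem_filter]; exact ⟨hr, hrIoo, hodd⟩
          simp only [hrT, if_true]
          exact hodd.add_one
        · have hrT : r ∉ T := by rw [hTdef, Finset.mem_filter]; tauto
          simp only [hrT, if_false, add_zero]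
          exact Nat.not_odd_iff_even.1 hodd
      exact heven.pow_nonneg _
    · have hbase : 0 < (x - r) * (y - r) := by
        obtain hcase | hcase : r ≤ -1 ∨ 1 ≤ r := by
          by_contra hcon
          push_neg at hcon
          exact hrIoo ⟨hcon.1, hcon.2⟩
        · nlinarith [hx.1, hy.1]
        · nlinarith [hx.2, hy.2]
      exact pow_nonneg hbase.le _
  -- cardinality of T
  have hroots_le : p.roots.card ≤ n := by
    rw [← hpdeg]; exact_mod_cast Polynomial.card_roots' p
  have hTcard_le : T.card ≤ n := by
    calc T.card ≤ F.card := Finset.card_le_card (Finset.filter_subset _ _)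
      _ ≤ p.roots.card := Multiset.toFinset_card_le _
      _ ≤ n := hroots_le
  have hTcard : T.card = n := by
    by_contra hne'
    have hlt : T.card < n := lt_of_le_of_ne hTcard_le hne'
    have horth := JacAux.orth ha hb q (by rw [hqdeg]; exact hlt)
    have hpq0 : p * q ≠ 0 := mul_ne_zero hp0 hq0
    have hfin : {x : ℝ | (p * q).IsRoot x}.Finite := Polynomial.finite_setOf_isRoot hpq0
    have hioo_inf : (Set.Ioo (-1:ℝ) 1).Infinite := Set.Ioo_infinite (by norm_num)
    obtain ⟨x₀, hx₀⟩ := (hioo_inf.diff hfin).nonempty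
    have hx₀Ioo : x₀ ∈ Set.Ioo (-1:ℝ) 1 := hx₀.1
    have hg0 : p.eval x₀ * q.eval x₀ ≠ 0 := by
      intro h
      exact hx₀.2 (by simpa [Polynomial.IsRoot, Polynomial.eval_mul] using h)
    set f : ℝ → ℝ := fun x => (1 - x) ^ a * (1 + x) ^ b * (p.eval x * q.eval x) with hf
    have hfint : IntervalIntegrable f volume (-1) 1 :=
      JacAux.intervalIntegrable_term ha hb (p.continuous.mul q.continuous)
    have hI : ∫ x in (-1:ℝ)..1, f x = 0 := by
      rw [hf]
      simp only [hpe]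
      exact horth
    have hwpos : ∀ x ∈ Set.Ioo (-1:ℝ) 1, (0:ℝ) < (1 - x) ^ a * (1 + x) ^ b := by
      intro x hx
      exact mul_pos (Real.rpow_pos_of_pos (by linarith [hx.2] : (0:ℝ) < 1 - x) a)
        (Real.rpow_pos_of_pos (by linarith [hx.1] : (0:ℝ) < 1 + x) b)
    have hfne : ∀ x ∈ Set.Ioo (-1:ℝ) 1 \ {x : ℝ | (p * q).IsRoot x}, f x ≠ 0 := by
      intro x hx
      have hgx : p.eval x * q.eval x ≠ 0 := by
        intro h
        exact hx.2 (by simpa [Polynomial.IsRoot, Polynomial.eval_mul] using h)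
      exact mul_ne_zero (ne_of_gt (hwpos x hx.1)) hgx
    rcases hg0.lt_or_gt with hneg | hpos
    · have hnn : ∀ x ∈ Set.Ioo (-1:ℝ) 1, 0 ≤ -f x := by
        intro x hx
        have h1 := hsign x hx x₀ hx₀Ioo
        have hgle : p.eval x * q.eval x ≤ 0 := by nlinarith
        have hw := hwpos x hx
        rw [hf]
        simp only [neg_nonneg]
        exact mul_nonpos_of_nonneg_of_nonpos hw.le hgle
      have hposI := JacAux.integral_pos_aux hfint.neg hnn hfin
        (fun x hx => by simpa using hfne x hx)
      have hposI' : (0:ℝ) < -∫ x in (-1:ℝ)..1, f x := by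
        simpa [intervalIntegral.integral_neg] using hposI
      rw [hI] at hposI'
      norm_num at hposI'
    · have hnn : ∀ x ∈ Set.Ioo (-1:ℝ) 1, 0 ≤ f x := by
        intro x hx
        have h1 := hsign x hx x₀ hx₀Ioo
        have hgge : 0 ≤ p.eval x * q.eval x := by nlinarith
        have hw := hwpos x hx
        exact mul_nonneg hw.le hgge
      have hposI := JacAux.integral_pos_aux hfint hnn hfin hfne
      rw [hI] at hposI
      norm_num at hposI
  -- all multiplicities are 1 and F = T
  have hsum_all : ∑ r ∈ F, p.rootMultiplicity r = Multiset.card p.roots := by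
    rw [← Multiset.toFinset_sum_count_eq p.roots]
    exact Finset.sum_congr rfl (fun r _ => (Polynomial.count_roots p).symm)
  have hone : ∀ r ∈ T, 1 ≤ p.rootMultiplicity r := by
    intro r hr
    have hrF : r ∈ F := (Finset.mem_filter.1 hr).1
    have hrr : r ∈ p.roots := Multiset.mem_toFinset.1 hrF
    rw [← Polynomial.count_roots]
    exact Multiset.one_le_count_iff_mem.2 hrr
  have hsumT_le : ∑ r ∈ T, p.rootMultiplicity r ≤ n := by
    calc ∑ r ∈ T, p.rootMultiplicity r ≤ ∑ r ∈ F, p.rootMultiplicity r :=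
          Finset.sum_le_sum_of_subset (Finset.filter_subset _ _)
      _ = Multiset.card p.roots := hsum_all
      _ ≤ n := hroots_le
  have hsumT_ge : n ≤ ∑ r ∈ T, p.rootMultiplicity r := by
    calc n = T.card := hTcard.symm
      _ = ∑ _r ∈ T, 1 := by simp
      _ ≤ ∑ r ∈ T, p.rootMultiplicity r := Finset.sum_le_sum hone
  have hmult_one : ∀ r ∈ T, p.rootMultiplicity r = 1 := by
    by_contra hcon
    push_neg at hcon
    obtain ⟨r, hrT, hrne⟩ := hcon
    have hstrict : ∑ _r ∈ T, 1 < ∑ r ∈ T, p.rootMultiplicity r :=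
      Finset.sum_lt_sum hone ⟨r, hrT, by have := hone r hrT; omega⟩
    have : T.card < ∑ r ∈ T, p.rootMultiplicity r := by simpa using hstrict
    omega
  have hFT : F = T := by
    refine Finset.Subset.antisymm ?_ (Finset.filter_subset _ _)
    intro r hrF
    by_contra hrT
    have hpos : 0 < p.rootMultiplicity r := by
      rw [← Polynomial.count_roots]
      exact Multiset.count_pos.2 (Multiset.mem_toFinset.1 hrF)
    have : ∑ s ∈ T, p.rootMultiplicity s < ∑ s ∈ F, p.rootMultiplicity s :=
      Finset.sum_lt_sum_of_subset (Finset.filter_subset _ _) hrF hrT hpos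
        (fun _ _ _ => Nat.zero_le _)
    omega
  -- package the answer
  refine ⟨fun i => ((T.orderIsoOfFin hTcard) i : ℝ), ?_, ?_, ?_⟩
  · intro i j hij
    exact (T.orderIsoOfFin hTcard).injective (Subtype.ext hij)
  · intro i
    have hmem : ((T.orderIsoOfFin hTcard) i : ℝ) ∈ T := ((T.orderIsoOfFin hTcard) i).2
    obtain ⟨hrF, hrIoo, hrodd⟩ := Finset.mem_filter.1 hmem
    have hroot : p.eval ((T.orderIsoOfFin hTcard) i : ℝ) = 0 :=
      (Polynomial.mem_roots'.1 (Multiset.mem_toFinset.1 hrF)).2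
    refine ⟨hrIoo, by rw [← hpe]; exact hroot, ?_⟩
    intro hder0
    have hderiv_eq : deriv (fun τ => jacobiPNat n a b τ) ((T.orderIsoOfFin hTcard) i : ℝ)
        = p.derivative.eval ((T.orderIsoOfFin hTcard) i : ℝ) := by
      have hfun : (fun τ => jacobiPNat n a b τ) = fun τ => p.eval τ := by
        funext τ; rw [hpe]
      rw [hfun, Polynomial.deriv]
    have hroot1 : ∀ m ≤ 1, (Polynomial.derivative^[m] p).IsRoot
        ((T.orderIsoOfFin hTcard) i : ℝ) := by
      intro m hm
      interval_cases m
      · simpa [Polynomial.IsRoot] using hroot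
      · rw [Function.iterate_one]
        rw [Polynomial.IsRoot]
        rw [← hderiv_eq]
        exact hder0
    have hlt := Polynomial.lt_rootMultiplicity_of_isRoot_iterate_derivative_of_mem_nonZeroDivisors
      hp0 hroot1 (by rw [Nat.factorial_one, Nat.cast_one]; exact one_mem _)
    have := hmult_one _ hmem
    omega
  · intro x hx
    have hpx : p.eval x = 0 := by rw [hpe]; exact hx
    have hxr : x ∈ p.roots := Polynomial.mem_roots'.2 ⟨hp0, hpx⟩
    have hxT : x ∈ T := hFT ▸ Multiset.mem_toFinset.2 hxr
    obtain ⟨i, hi⟩ := (T.orderIsoOfFin hTcard).surjective ⟨x, hxT⟩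
    exact ⟨i, (congrArg Subtype.val hi).symm⟩
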